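/- arXiv:1203.1048 — 2 statements merged into one kernel-verified Lean document; each statement's English description precedes it below -/
import Mathlib

section
/- Let K be a field of characteristic zero, L a Lie algebra over K, H a Lie subalgebra of L, α a root, and e ∈ L_α, f ∈ L_{−α} such that (h,e,f) is an sl₂-triple with h = ⁅e,f⁆ ∈ H. Let M be an L-module on which e and f act nilpotently, and let θ_M = exp(e_M) ∘ exp((−f)_M) ∘ exp(e_M), where x_M denotes the action of x on M. Then for every linear functional ν on H, θ_M maps the weight space M_ν = {m ∈ M : h'·m = ν(h')•m for all h' ∈ H} bijectively onto the weight space M_{ν − ν(h)α}. -/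
/-- For a linear functional `α` on a Lie subalgebra `H` of `L`, the root space `L_α` is
`{x ∈ L : ⁅h, x⁆ = α h • x for all h ∈ H}`. -/
def rootSpace' {K L : Type*} [Field K] [LieRing L] [LieAlgebra K L]
    (H : LieSubalgebra K L) (α : Module.Dual K H) : Submodule K L :=
  ⨅ h : H, Module.End.eigenspace (LieAlgebra.ad K L (h : L)) (α h)

/-- `α` is a root of `(L, H)` if it is a nonzero functional with nonzero root space. -/
def IsRoot' {K L : Type*} [Field K] [LieRing L] [LieAlgebra K L]
    (H : LieSubalgebra K L) (α : Module.Dual K H) : Prop :=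
  α ≠ 0 ∧ rootSpace' H α ≠ ⊥

/-- For a linear functional `ν` on a Lie subalgebra `H` of `L` and an `L`-module `M`,
the weight space `M_ν` is `{m ∈ M : h • m = ν h • m for all h ∈ H}`. -/
def weightSpace' {K L : Type*} [Field K] [LieRing L] [LieAlgebra K L]
    (H : LieSubalgebra K L) (M : Type*) [AddCommGroup M] [Module K M]
    [LieRingModule L M] [LieModule K L M] (ν : Module.Dual K H) : Submodule K M :=
  ⨅ h : H, Module.End.eigenspace (LieModule.toEnd K L M (h : L)) (ν h)

/-- The exponential `exp D = Σₙ Dⁿ/n!` of an endomorphism `D`.  For a nilpotent `D` this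
is the usual exponential, since the sum ranges over all `n` with `D ^ n ≠ 0`
(`D ^ n = 0` whenever `n ≥ nilpotencyClass D`). -/
noncomputable def expEnd {K M : Type*} [Field K] [AddCommGroup M] [Module K M]
    (D : Module.End K M) : Module.End K M :=
  ∑ n ∈ Finset.range (nilpotencyClass D + 1), (n.factorial : K)⁻¹ • D ^ n

section helpers

variable {K M : Type*} [Field K] [CharZero K] [AddCommGroup M] [Module K M]

lemma expEnd_eq_sum_range {D : Module.End K M} {N : ℕ} (hD : D ^ N = 0) :
    expEnd D = ∑ n ∈ Finset.range N, (n.factorial : K)⁻¹ • D ^ n := by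
  have hnil : IsNilpotent D := ⟨N, hD⟩
  have key : ∀ n, nilpotencyClass D ≤ n → D ^ n = 0 := fun n hn =>
    pow_eq_zero_of_le hn (pow_nilpotencyClass hnil)
  have keyN : ∀ n, N ≤ n → D ^ n = 0 := fun n hn => pow_eq_zero_of_le hn hD
  rw [expEnd]
  trans (∑ n ∈ Finset.range (max (nilpotencyClass D + 1) N), (n.factorial : K)⁻¹ • D ^ n)
  · refine Finset.sum_subset (Finset.range_subset_range.mpr (le_max_left _ _)) fun n _ hn' => ?_
    rw [Finset.mem_range, not_lt] at hn'
    rw [key n (by omega), smul_zero]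
  · refine (Finset.sum_subset (Finset.range_subset_range.mpr (le_max_right _ _)) fun n _ hn' => ?_).symm
    rw [Finset.mem_range, not_lt] at hn'
    rw [keyN n hn', smul_zero]

lemma expEnd_mul_expEnd {A B : Module.End K M} {N : ℕ} (hc : Commute A B)
    (hA : A ^ N = 0) (hB : B ^ N = 0) :
    expEnd A * expEnd B = expEnd (A + B) := by
  have hAB : (A + B) ^ (N + N) = 0 := by
    rw [hc.add_pow]
    refine Finset.sum_eq_zero fun k hk => ?_
    rcases le_or_gt N k with h | h
    · rw [pow_eq_zero_of_le h hA, zero_mul, zero_mul]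
    · rw [pow_eq_zero_of_le (show N ≤ N + N - k by omega) hB, mul_zero, zero_mul]
  rw [expEnd_eq_sum_range hA, expEnd_eq_sum_range hB, expEnd_eq_sum_range hAB,
    Finset.sum_mul_sum]
  have hg : ∀ i j : ℕ, ((i.factorial : K)⁻¹ • A ^ i) * ((j.factorial : K)⁻¹ • B ^ j)
      = ((i.factorial : K)⁻¹ * (j.factorial : K)⁻¹) • (A ^ i * B ^ j) := fun i j => by
    rw [smul_mul_assoc, mul_smul_comm, smul_smul]
  simp only [hg]
  have hrhs : ∀ n ∈ Finset.range (N + N), (n.factorial : K)⁻¹ • (A + B) ^ n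
      = ∑ k ∈ Finset.range (n + 1),
          ((k.factorial : K)⁻¹ * ((n - k).factorial : K)⁻¹) • (A ^ k * B ^ (n - k)) := by
    intro n _
    rw [hc.add_pow, Finset.smul_sum]
    refine Finset.sum_congr rfl fun k hk => ?_
    rw [Finset.mem_range] at hk
    have hkn : k ≤ n := by omega
    have h1 : A ^ k * B ^ (n - k) * (n.choose k : Module.End K M)
        = (n.choose k : K) • (A ^ k * B ^ (n - k)) := by
      rw [(Nat.commute_cast _ _).eq, ← nsmul_eq_mul, ← Nat.cast_smul_eq_nsmul K]
    rw [h1, smul_smul]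
    congr 1
    rw [Nat.cast_choose K hkn]
    have h2 : (n.factorial : K) ≠ 0 := Nat.cast_ne_zero.mpr (Nat.factorial_ne_zero n)
    have h3 : (k.factorial : K) ≠ 0 := Nat.cast_ne_zero.mpr (Nat.factorial_ne_zero k)
    have h4 : ((n - k).factorial : K) ≠ 0 := Nat.cast_ne_zero.mpr (Nat.factorial_ne_zero _)
    field_simp
  rw [Finset.sum_congr rfl hrhs]
  -- now reindex
  set F : ℕ × ℕ → Module.End K M :=
    fun p => ((p.1.factorial : K)⁻¹ * (p.2.factorial : K)⁻¹) • (A ^ p.1 * B ^ p.2) with hF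
  have key2 : ∑ i ∈ Finset.range N, ∑ j ∈ Finset.range N, F (i, j)
      = ∑ p ∈ (Finset.range (N + N) ×ˢ Finset.range (N + N)).filter
          (fun p => p.1 + p.2 < N + N), F p := by
    rw [← Finset.sum_product']
    refine Finset.sum_subset ?_ ?_
    · intro p hp
      rw [Finset.mem_product, Finset.mem_range, Finset.mem_range] at hp
      simp only [Finset.mem_filter, Finset.mem_product, Finset.mem_range]
      omega
    · intro p hp hp'
      rw [Finset.mem_filter, Finset.mem_product, Finset.mem_range, Finset.mem_range] at hp
      rw [Finset.mem_product, Finset.mem_range, Finset.mem_range] at hp'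
      have : N ≤ p.1 ∨ N ≤ p.2 := by omega
      rcases this with h | h
      · show F (p.1, p.2) = 0
        rw [hF]; dsimp only; rw [pow_eq_zero_of_le h hA, zero_mul, smul_zero]
      · show F (p.1, p.2) = 0
        rw [hF]; dsimp only; rw [pow_eq_zero_of_le h hB, mul_zero, smul_zero]
  have key3 : ∑ n ∈ Finset.range (N + N), ∑ k ∈ Finset.range (n + 1), F (k, n - k)
      = ∑ p ∈ (Finset.range (N + N) ×ˢ Finset.range (N + N)).filter
          (fun p => p.1 + p.2 < N + N), F p := by
    rw [Finset.sum_sigma' (Finset.range (N + N)) (fun n => Finset.range (n + 1))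
      (fun n k => F (k, n - k))]
    refine Finset.sum_nbij' (fun p => (p.2, p.1 - p.2)) (fun q => ⟨q.1 + q.2, q.1⟩)
      ?_ ?_ ?_ ?_ ?_
    · rintro ⟨n, k⟩ hp
      simp only [Finset.mem_sigma, Finset.mem_range] at hp
      simp only [Finset.mem_filter, Finset.mem_product, Finset.mem_range]
      omega
    · rintro ⟨i, j⟩ hq
      simp only [Finset.mem_filter, Finset.mem_product, Finset.mem_range] at hq
      simp only [Finset.mem_sigma, Finset.mem_range]
      omega
    · rintro ⟨n, k⟩ hp
      simp only [Finset.mem_sigma, Finset.mem_range] at hp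
      show (⟨k + (n - k), k⟩ : Σ _ : ℕ, ℕ) = ⟨n, k⟩
      rw [show k + (n - k) = n by omega]
    · rintro ⟨i, j⟩ _
      show (i, i + j - i) = (i, j)
      rw [Nat.add_sub_cancel_left]
    · rintro ⟨n, k⟩ hp
      rfl
  rw [key2, key3]

lemma expEnd_mul_expEnd_neg {D : Module.End K M} (hD : IsNilpotent D) :
    expEnd D * expEnd (-D) = 1 := by
  obtain ⟨N, hN⟩ := hD
  have hN' : (-D) ^ N = 0 := by rw [neg_pow, hN, mul_zero]
  rw [expEnd_mul_expEnd ((Commute.refl D).neg_right) hN hN', add_neg_cancel,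
    expEnd_eq_sum_range (show (0 : Module.End K M) ^ 1 = 0 by rw [pow_one])]
  simp

lemma expEnd_neg_mul_expEnd {D : Module.End K M} (hD : IsNilpotent D) :
    expEnd (-D) * expEnd D = 1 := by
  have := expEnd_mul_expEnd_neg hD.neg
  rwa [neg_neg] at this

lemma expEnd_conj {D : Module.End K M} (hD : IsNilpotent D) (A : Module.End K M) :
    expEnd D * A * expEnd (-D)
      = expEnd (LinearMap.mulLeft K D - LinearMap.mulRight K D) A := by
  obtain ⟨N, hN⟩ := hD
  have hDneg : (-D) ^ N = 0 := by rw [neg_pow, hN, mul_zero]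
  set Lm : Module.End K (Module.End K M) := LinearMap.mulLeft K D with hLm
  set Rm : Module.End K (Module.End K M) := LinearMap.mulRight K D with hRm
  have hL : Lm ^ N = 0 := by
    rw [hLm, LinearMap.pow_mulLeft, hN]; ext X; simp
  have hmr : -Rm = LinearMap.mulRight K (-D) := by
    ext X; simp [hRm]
  have hR : (-Rm) ^ N = 0 := by
    rw [hmr, LinearMap.pow_mulRight, hDneg]; ext X; simp
  have hc0 : Commute Lm Rm := LinearMap.commute_mulLeft_right D D
  have hcomm : Commute Lm (-Rm) := hc0.neg_right
  rw [sub_eq_add_neg, ← expEnd_mul_expEnd hcomm hL hR, Module.End.mul_apply]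
  have h1 : expEnd (-Rm) A = A * expEnd (-D) := by
    rw [expEnd_eq_sum_range hR, expEnd_eq_sum_range hDneg, LinearMap.sum_apply,
      Finset.mul_sum]
    refine Finset.sum_congr rfl fun n _ => ?_
    rw [LinearMap.smul_apply, hmr, LinearMap.pow_mulRight, LinearMap.mulRight_apply,
      mul_smul_comm]
  rw [h1, expEnd_eq_sum_range hL, LinearMap.sum_apply, expEnd_eq_sum_range hN,
    Finset.sum_mul, Finset.sum_mul]
  refine Finset.sum_congr rfl fun n _ => ?_
  rw [LinearMap.smul_apply, hLm, LinearMap.pow_mulLeft, LinearMap.mulLeft_apply,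
    smul_mul_assoc, smul_mul_assoc, mul_assoc]

/-- Moving an operator `A` from the left of `expEnd D` to the right, when
`(ad D)^3 A = 0`. -/
lemma expEnd_move {D : Module.End K M} (hD : IsNilpotent D) (A B C : Module.End K M)
    (h1 : D * A - A * D = B) (h2 : D * B - B * D = C) (h3 : D * C = C * D) :
    A * expEnd D = expEnd D * (A - B + (2 : K)⁻¹ • C) := by
  have hconj := expEnd_conj hD.neg A
  rw [neg_neg] at hconj
  set T : Module.End K (Module.End K M) :=
    LinearMap.mulLeft K (-D) - LinearMap.mulRight K (-D) with hTdef
  have hTapp : ∀ X : Module.End K M, T X = (-D) * X - X * (-D) := fun X => by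
    rw [hTdef, LinearMap.sub_apply, LinearMap.mulLeft_apply, LinearMap.mulRight_apply]
  have hTA : T A = -B := by
    rw [hTapp, ← h1]; simp only [neg_mul, mul_neg]; abel
  have hTB : T (-B) = C := by
    rw [hTapp, ← h2]; simp only [neg_mul, mul_neg]; abel
  have hTC : T C = 0 := by
    rw [hTapp]; simp only [neg_mul, mul_neg, h3]; abel
  have hT : IsNilpotent T := by
    obtain ⟨N, hN⟩ := hD
    have hDneg : (-D) ^ N = 0 := by rw [neg_pow, hN, mul_zero]
    have hc0 : Commute (LinearMap.mulLeft K (-D) : Module.End K (Module.End K M))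
        (LinearMap.mulRight K (-D)) := LinearMap.commute_mulLeft_right (-D) (-D)
    refine hc0.isNilpotent_sub ⟨N, ?_⟩ ⟨N, ?_⟩
    · rw [LinearMap.pow_mulLeft, hDneg]; ext X; simp
    · rw [LinearMap.pow_mulRight, hDneg]; ext X; simp
  obtain ⟨Nt, hNt⟩ := hT
  have hbig : T ^ max Nt 3 = 0 := pow_eq_zero_of_le (le_max_left _ _) hNt
  rw [expEnd_eq_sum_range hbig, LinearMap.sum_apply] at hconj
  have hsmall : ∑ n ∈ Finset.range (max Nt 3), ((n.factorial : K)⁻¹ • T ^ n) A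
      = ∑ n ∈ Finset.range 3, ((n.factorial : K)⁻¹ • T ^ n) A := by
    refine (Finset.sum_subset (Finset.range_subset_range.mpr (le_max_right _ _))
      fun n _ hn' => ?_).symm
    rw [Finset.mem_range, not_lt] at hn'
    have hTn : T ^ n = T ^ (n - 3) * T ^ 3 := by rw [← pow_add]; congr 1; omega
    have hT3 : (T ^ 3) A = 0 := by
      rw [pow_succ, pow_succ, pow_one, Module.End.mul_apply, Module.End.mul_apply,
        hTA, hTB, hTC]
    rw [LinearMap.smul_apply, hTn, Module.End.mul_apply, hT3, map_zero, smul_zero]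
  rw [hsmall] at hconj
  rw [Finset.sum_range_succ, Finset.sum_range_succ, Finset.sum_range_one] at hconj
  have hT2 : (T ^ 2) A = C := by
    rw [pow_two, Module.End.mul_apply, hTA, hTB]
  simp only [pow_zero, pow_one, Module.End.one_apply, LinearMap.smul_apply,
    Nat.factorial_zero, Nat.factorial_one, Nat.factorial_two, Nat.cast_one, inv_one,
    one_smul, Nat.cast_ofNat, hTA, hT2] at hconj
  have hfin : A + -B + (2 : K)⁻¹ • C = A - B + (2 : K)⁻¹ • C := by abel
  rw [hfin] at hconj
  calc A * expEnd D = 1 * (A * expEnd D) := by rw [one_mul]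
    _ = expEnd D * expEnd (-D) * (A * expEnd D) := by rw [expEnd_mul_expEnd_neg hD]
    _ = expEnd D * (expEnd (-D) * A * expEnd D) := by
        rw [mul_assoc]; rw [← mul_assoc (expEnd (-D))]
    _ = expEnd D * (A - B + (2 : K)⁻¹ • C) := by rw [hconj]

lemma expEnd_move₂ {D : Module.End K M} (hD : IsNilpotent D) (A B : Module.End K M)
    (h1 : D * A - A * D = B) (h2 : D * B = B * D) :
    A * expEnd D = expEnd D * (A - B) := by
  have := expEnd_move hD A B 0 h1 (by rw [sub_eq_zero]; exact h2) (by simp)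
  simpa using this

lemma expEnd_conj_triple {E F Hh Hd : Module.End K M} {a : K}
    (hnE : IsNilpotent E) (hnF : IsNilpotent F)
    (h1 : Hd * E - E * Hd = a • E) (h2 : Hd * F - F * Hd = -(a • F))
    (h3 : E * F - F * E = Hh)
    (h4 : Hh * E - E * Hh = (2 : K) • E) (h5 : Hh * F - F * Hh = (-2 : K) • F) :
    Hd * (expEnd E * expEnd (-F) * expEnd E)
      = (expEnd E * expEnd (-F) * expEnd E) * (Hd - a • Hh) := by
  have hnF' : IsNilpotent (-F) := hnF.neg
  set X := expEnd E with hX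
  set Y := expEnd (-F) with hY
  have m1 : Hd * X = X * (Hd + a • E) := by
    have := expEnd_move₂ hnE Hd (-(a • E))
      (by rw [← h1]; abel)
      (by simp only [mul_neg, neg_mul, mul_smul_comm, smul_mul_assoc, smul_neg, neg_neg])
    rwa [sub_neg_eq_add] at this
  have m2 : Hd * Y = Y * (Hd + a • F) := by
    have := expEnd_move₂ hnF' Hd (-(a • F))
      (by rw [← h2]; simp only [neg_mul, mul_neg]; abel)
      (by simp only [mul_neg, neg_mul, mul_smul_comm, smul_mul_assoc, smul_neg, neg_neg])
    rwa [sub_neg_eq_add] at this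
  have m3 : E * Y = Y * (E - Hh - F) := by
    have := expEnd_move hnF' E Hh ((-2 : K) • F)
      (by rw [← h3]; simp only [neg_mul, mul_neg]; abel)
      (by rw [← h5]; simp only [neg_mul, mul_neg]; abel)
      (by simp only [mul_neg, neg_mul, mul_smul_comm, smul_mul_assoc, smul_neg, neg_neg])
    rw [this]
    congr 1
    rw [smul_smul]
    norm_num
    abel
  have m4 : Hh * X = X * (Hh + (2 : K) • E) := by
    have := expEnd_move₂ hnE Hh (-((2 : K) • E))
      (by rw [← h4]; abel)
      (by simp only [mul_neg, neg_mul, mul_smul_comm, smul_mul_assoc, smul_neg, neg_neg])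
    rwa [sub_neg_eq_add] at this
  have m5 : E * X = X * E := by
    have := expEnd_move₂ hnE E 0 (by rw [sub_self]) (by simp)
    rwa [sub_zero] at this
  have c1 : (Hd + a • E) * Y = Y * (Hd + a • E - a • Hh) := by
    rw [add_mul, smul_mul_assoc, m2, m3, ← mul_smul_comm, ← mul_add]
    congr 1
    module
  have c2 : (Hd + a • E - a • Hh) * X = X * (Hd - a • Hh) := by
    rw [sub_mul, add_mul, smul_mul_assoc, smul_mul_assoc, m1, m5, m4,
      ← mul_smul_comm, ← mul_smul_comm, ← mul_add, ← mul_sub]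
    congr 1
    module
  calc Hd * (X * Y * X) = Hd * X * Y * X := by
        rw [mul_assoc, mul_assoc, mul_assoc]
    _ = X * ((Hd + a • E) * Y) * X := by rw [m1, mul_assoc X]
    _ = X * (Y * (Hd + a • E - a • Hh)) * X := by rw [c1]
    _ = X * Y * ((Hd + a • E - a • Hh) * X) := by
        rw [← mul_assoc, mul_assoc (X * Y)]
    _ = X * Y * X * (Hd - a • Hh) := by rw [c2, mul_assoc (X * Y)]

end helpers

/-- Let `K` be a field of characteristic zero, `L` a Lie algebra over `K`, `H` a Lie
subalgebra, `α` a root, `e ∈ L_α`, `f ∈ L_{−α}` with `(h, e, f)` an `sl₂`-triple where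
`h = ⁅e, f⁆ ∈ H`.  Let `M` be an `L`-module on which `e` and `f` act nilpotently and
`θ_M = exp(e_M) ∘ exp((−f)_M) ∘ exp(e_M)`.  Then for every linear functional `ν` on `H`,
`θ_M` maps the weight space `M_ν` bijectively onto the weight space `M_{ν − ν(h)α}`. -/
theorem weyl_element_maps_weight_spaces
    {K L : Type*} [Field K] [CharZero K] [LieRing L] [LieAlgebra K L]
    (H : LieSubalgebra K L)
    (α : Module.Dual K H) (hroot : IsRoot' H α)
    (e f : L) (hmeme : e ∈ rootSpace' H α) (hmemf : f ∈ rootSpace' H (-α))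
    (h : H) (hef : ⁅e, f⁆ = (h : L)) (he : e ≠ 0) (hf : f ≠ 0)
    (hhe : ⁅(h : L), e⁆ = (2 : K) • e) (hhf : ⁅(h : L), f⁆ = (-2 : K) • f)
    (M : Type*) [AddCommGroup M] [Module K M] [LieRingModule L M] [LieModule K L M]
    (hnile : IsNilpotent (LieModule.toEnd K L M e))
    (hnilf : IsNilpotent (LieModule.toEnd K L M f))
    (θM : Module.End K M)
    (hθM : θM = expEnd (LieModule.toEnd K L M e) * expEnd (LieModule.toEnd K L M (-f)) *
      expEnd (LieModule.toEnd K L M e))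
    (ν : Module.Dual K H) :
    Set.BijOn θM (weightSpace' H M ν) (weightSpace' H M (ν - ν h • α)) := by
  have heα : ∀ h' : H, ⁅(h' : L), e⁆ = α h' • e := fun h' => by
    have := (Submodule.mem_iInf _).mp hmeme h'
    rw [Module.End.mem_eigenspace_iff, LieAlgebra.ad_apply] at this
    exact this
  have hfα : ∀ h' : H, ⁅(h' : L), f⁆ = -(α h' • f) := fun h' => by
    have := (Submodule.mem_iInf _).mp hmemf h'
    rw [Module.End.mem_eigenspace_iff, LieAlgebra.ad_apply] at this
    rw [this, LinearMap.neg_apply, neg_smul]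
  have hα2 : α h = 2 := by
    have h1 := heα h
    rw [hhe] at h1
    have h2 : (α h - 2) • e = 0 := by rw [sub_smul, h1, sub_self]
    rcases smul_eq_zero.mp h2 with h3 | h3
    · exact sub_eq_zero.mp h3
    · exact absurd h3 he
  set E := LieModule.toEnd K L M e with hE
  set Fo := LieModule.toEnd K L M f with hFo
  set Hh := LieModule.toEnd K L M (h : L) with hHh
  set Hd : H → Module.End K M := fun h' => LieModule.toEnd K L M (h' : L) with hHd
  have hbracket : ∀ x y : L, LieModule.toEnd K L M ⁅x, y⁆
      = LieModule.toEnd K L M x * LieModule.toEnd K L M y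
        - LieModule.toEnd K L M y * LieModule.toEnd K L M x := fun x y => by
    ext m; simp only [LinearMap.sub_apply, Module.End.mul_apply, LieModule.toEnd_apply_apply, lie_lie]
  have r1 : ∀ h' : H, Hd h' * E - E * Hd h' = α h' • E := fun h' => by
    rw [hHd, hE, ← hbracket, heα h', map_smul]
  have r2 : ∀ h' : H, Hd h' * Fo - Fo * Hd h' = -(α h' • Fo) := fun h' => by
    rw [hHd, hFo, ← hbracket, hfα h', map_neg, map_smul]
  have r3 : E * Fo - Fo * E = Hh := by rw [hE, hFo, hHh, ← hbracket, hef]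
  have r4 : Hh * E - E * Hh = (2 : K) • E := by
    rw [hHh, hE, ← hbracket, hhe, map_smul]
  have r5 : Hh * Fo - Fo * Hh = (-2 : K) • Fo := by
    rw [hHh, hFo, ← hbracket, hhf, map_smul]
  have hEne : LieModule.toEnd K L M (-f) = -Fo := by rw [map_neg, hFo]
  rw [hEne] at hθM
  set θ' : Module.End K M := expEnd (-E) * expEnd Fo * expEnd (-E) with hθ'
  -- conjugation identities
  have key1 : ∀ h' : H, Hd h' * θM = θM * (Hd h' - α h' • Hh) := fun h' => by
    rw [hθM]
    exact expEnd_conj_triple hnile hnilf (r1 h') (r2 h') r3 r4 r5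
  have key2 : ∀ h' : H, Hd h' * θ' = θ' * (Hd h' - α h' • Hh) := fun h' => by
    have r1' : Hd h' * (-E) - (-E) * Hd h' = α h' • (-E) := by
      simp only [mul_neg, neg_mul, smul_neg]
      rw [← r1 h']; abel
    have r2' : Hd h' * (-Fo) - (-Fo) * Hd h' = -(α h' • (-Fo)) := by
      simp only [mul_neg, neg_mul, smul_neg, neg_neg]
      rw [← neg_neg (α h' • Fo), ← r2 h']; abel
    have r3' : (-E) * (-Fo) - (-Fo) * (-E) = Hh := by
      simp only [neg_mul, mul_neg, neg_neg]; exact r3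
    have r4' : Hh * (-E) - (-E) * Hh = (2 : K) • (-E) := by
      simp only [mul_neg, neg_mul, smul_neg]
      rw [← r4]; abel
    have r5' : Hh * (-Fo) - (-Fo) * Hh = (-2 : K) • (-Fo) := by
      simp only [mul_neg, neg_mul, smul_neg]
      rw [← r5]; abel
    have := expEnd_conj_triple hnile.neg hnilf.neg r1' r2' r3' r4' r5'
    rwa [neg_neg, ← hθ'] at this
  -- inverses
  have hXX' : expEnd E * expEnd (-E) = 1 := expEnd_mul_expEnd_neg hnile
  have hX'X : expEnd (-E) * expEnd E = 1 := expEnd_neg_mul_expEnd hnile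
  have hYY' : expEnd (-Fo) * expEnd Fo = 1 := expEnd_neg_mul_expEnd hnilf
  have hY'Y : expEnd Fo * expEnd (-Fo) = 1 := expEnd_mul_expEnd_neg hnilf
  have hinv1 : θM * θ' = 1 := by
    rw [hθM, hθ']
    simp only [mul_assoc]
    rw [← mul_assoc (expEnd E) (expEnd (-E)), hXX', one_mul,
      ← mul_assoc (expEnd (-Fo)) (expEnd Fo), hYY', one_mul, hXX']
  have hinv2 : θ' * θM = 1 := by
    rw [hθM, hθ']
    simp only [mul_assoc]
    rw [← mul_assoc (expEnd (-E)) (expEnd E), hX'X, one_mul,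
      ← mul_assoc (expEnd Fo) (expEnd (-Fo)), hY'Y, one_mul, hX'X]
  -- weight space membership
  have hmemW : ∀ (μ : Module.Dual K H) (m : M), m ∈ weightSpace' H M μ
      ↔ ∀ h' : H, Hd h' m = μ h' • m := fun μ m => by
    rw [weightSpace', Submodule.mem_iInf]
    exact forall_congr' fun h' => Module.End.mem_eigenspace_iff
  have happ : ∀ (θ : Module.End K M) (h' : H) (m : M),
      (∀ h'' : H, Hd h'' * θ = θ * (Hd h'' - α h'' • Hh)) →
      Hd h' (θ m) = θ (Hd h' m - α h' • Hh m) := fun θ h' m hθc => by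
    have : (Hd h' * θ) m = (θ * (Hd h' - α h' • Hh)) m := by rw [hθc h']
    simpa [Module.End.mul_apply, LinearMap.sub_apply, LinearMap.smul_apply] using this
  have maps1 : Set.MapsTo θM (weightSpace' H M ν) (weightSpace' H M (ν - ν h • α)) := by
    intro m hm
    rw [SetLike.mem_coe, hmemW] at hm ⊢
    intro h'
    have hHhm : Hh m = ν h • m := hm h
    have hsc : (ν - ν h • α) h' = ν h' - α h' * ν h := by
      simp only [LinearMap.sub_apply, LinearMap.smul_apply, smul_eq_mul]
      ring
    calc Hd h' (θM m) = θM (Hd h' m - α h' • Hh m) := happ θM h' m key1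
      _ = θM ((ν h' - α h' * ν h) • m) := by
          rw [hm h', hHhm, smul_smul, ← sub_smul]
      _ = (ν - ν h • α) h' • θM m := by rw [map_smul, hsc]
  have maps2 : Set.MapsTo θ' (weightSpace' H M (ν - ν h • α)) (weightSpace' H M ν) := by
    intro m hm
    rw [SetLike.mem_coe, hmemW] at hm ⊢
    intro h'
    have hHhm : Hh m = (ν - ν h • α) h • m := hm h
    have hsc : (ν - ν h • α) h' - α h' * (ν - ν h • α) h = ν h' := by
      simp only [LinearMap.sub_apply, LinearMap.smul_apply, smul_eq_mul, hα2]
      ring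
    calc Hd h' (θ' m) = θ' (Hd h' m - α h' • Hh m) := happ θ' h' m key2
      _ = θ' (((ν - ν h • α) h' - α h' * (ν - ν h • α) h) • m) := by
          rw [hm h', hHhm, smul_smul, ← sub_smul]
      _ = ν h' • θ' m := by rw [map_smul, hsc]
  refine Set.InvOn.bijOn ⟨?_, ?_⟩ maps1 maps2
  · intro m _
    have : (θ' * θM) m = (1 : Module.End K M) m := by rw [hinv2]
    simpa [Module.End.mul_apply] using this
  · intro m _
    have : (θM * θ') m = (1 : Module.End K M) m := by rw [hinv1]
    simpa [Module.End.mul_apply] using this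
end

section
/- Let K be an algebraically closed field of characteristic zero, L a finite-dimensional semisimple Lie algebra over K with nondegenerate Killing form κ, and H a splitting Cartan subalgebra of L. Let α be a root with coroot h_α, let e ∈ L_α and f ∈ L_{−α} be such that (h_α, e, f) is an sl₂-triple, and let θ = exp(ad e) ∘ exp(ad(−f)) ∘ exp(ad e). For λ ∈ H*, let h_λ ∈ H denote the unique element with κ(h_λ, x) = λ(x) for all x ∈ H. Then θ(h_λ) = h_{s_α λ}, where s_α λ = λ − λ(h_α)·ᾱ and ᾱ ∈ H* is the root α regarded as a functional on H. -/
lemma expEnd_apply_eq_sum {K M : Type*} [Field K] [AddCommGroup M] [Module K M]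
    {D : Module.End K M} (hD : IsNilpotent D) (x : M) {m : ℕ} (hm : (D ^ m) x = 0) :
    expEnd D x = ∑ n ∈ Finset.range m, (n.factorial : K)⁻¹ • (D ^ n) x := by
  have hx : ∀ n, m ≤ n → (D ^ n) x = 0 := fun n hn => by
    rw [← Nat.sub_add_cancel hn, pow_add, Module.End.mul_apply, hm, map_zero]
  have hD' : ∀ n, nilpotencyClass D + 1 ≤ n → (D ^ n) x = 0 := fun n hn => by
    have h1 : nilpotencyClass D ≤ n := le_trans (Nat.le_succ _) hn
    have : D ^ n = 0 := by
      rw [← Nat.sub_add_cancel h1, pow_add, pow_nilpotencyClass hD, mul_zero]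
    simp [this]
  have e1 : expEnd D x = ∑ n ∈ Finset.range (max (nilpotencyClass D + 1) m),
      (n.factorial : K)⁻¹ • (D ^ n) x := by
    rw [expEnd, LinearMap.sum_apply]
    simp only [LinearMap.smul_apply]
    refine Finset.sum_subset (Finset.range_subset_range.mpr (le_max_left _ _)) ?_
    intro n hn hn'
    rw [hD' n (by simpa using hn'), smul_zero]
  have e2 : ∑ n ∈ Finset.range m, (n.factorial : K)⁻¹ • (D ^ n) x
      = ∑ n ∈ Finset.range (max (nilpotencyClass D + 1) m),
        (n.factorial : K)⁻¹ • (D ^ n) x := by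
    refine Finset.sum_subset (Finset.range_subset_range.mpr (le_max_right _ _)) ?_
    intro n hn hn'
    rw [hx n (by simpa using hn'), smul_zero]
  rw [e1, e2]

lemma mem_rootSpace'_iff {K L : Type*} [Field K] [LieRing L] [LieAlgebra K L]
    {H : LieSubalgebra K L} {α : Module.Dual K H} {x : L} :
    x ∈ rootSpace' H α ↔ ∀ h : H, ⁅(h : L), x⁆ = α h • x := by
  simp [rootSpace', Submodule.mem_iInf, Module.End.mem_eigenspace_iff]

lemma mem_rootSpace_of_mem_rootSpace' {K L : Type*} [Field K] [LieRing L] [LieAlgebra K L]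
    {H : LieSubalgebra K L} [H.IsCartanSubalgebra] {α : Module.Dual K H} {x : L}
    (hx : x ∈ rootSpace' H α) : x ∈ LieAlgebra.rootSpace H ⇑α := by
  rw [LieModule.mem_genWeightSpace]
  intro h
  refine ⟨1, ?_⟩
  have := mem_rootSpace'_iff.mp hx h
  simp only [pow_one, LinearMap.sub_apply, LieModule.toEnd_apply_apply,
    LinearMap.smul_apply, Module.End.one_apply]
  rw [LieSubalgebra.coe_bracket_of_module, this, sub_self]

open LieModule in
lemma isNilpotent_ad_of_mem_rootSpace' {K L : Type*} [Field K] [IsAlgClosed K] [CharZero K]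
    [LieRing L] [LieAlgebra K L] [FiniteDimensional K L]
    (H : LieSubalgebra K L) [H.IsCartanSubalgebra]
    {α : Module.Dual K H} (hα : (⇑α : H → K) ≠ 0) {e : L} (he : e ∈ rootSpace' H α) :
    IsNilpotent (LieAlgebra.ad K L e) := by
  classical
  have he' : e ∈ LieAlgebra.rootSpace H ⇑α := mem_rootSpace_of_mem_rootSpace' he
  have key : ∀ (n : ℕ) (χ : H → K), Set.MapsTo ((LieAlgebra.ad K L e) ^ n)
      (genWeightSpace L χ) (genWeightSpace L (n • ⇑α + χ)) := by
    intro n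
    induction n with
    | zero => intro χ; simpa [Module.End.one_eq_id] using Set.mapsTo_id _
    | succ n ih =>
      intro χ
      have h1 : Set.MapsTo (toEnd K L L e) (genWeightSpace L (n • ⇑α + χ))
          (genWeightSpace L (⇑α + (n • ⇑α + χ))) :=
        LieAlgebra.mapsTo_toEnd_genWeightSpace_add_of_mem_rootSpace K L H L ⇑α (n • ⇑α + χ) he'
      have h2 : ⇑α + (n • ⇑α + χ) = (n + 1) • ⇑α + χ := by
        ext x; simp [succ_nsmul]; ring
      rw [pow_succ']
      exact (h2 ▸ h1).comp (ih χ)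
  have hfin := LieModule.finite_genWeightSpace_ne_bot K H L
  have hev : ∀ᶠ (k : ℕ) in Filter.atTop,
      ∀ χ ∈ {χ : H → K | genWeightSpace L χ ≠ ⊥}, genWeightSpace L (k • ⇑α + χ) = ⊥ := by
    rw [Filter.eventually_all_finite hfin]
    intro χ _
    exact LieModule.eventually_genWeightSpace_smul_add_eq_bot L ⇑α χ hα
  obtain ⟨N, hN⟩ := hev.exists
  refine ⟨N, ?_⟩
  ext x
  have hx : x ∈ ⨆ χ : H → K, genWeightSpace L χ := by
    simp [LieModule.iSup_genWeightSpace_eq_top K H L]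
  simp only [LinearMap.zero_apply]
  induction hx using LieSubmodule.iSup_induction' with
  | mem χ y hy =>
    by_cases hbot : genWeightSpace L χ = (⊥ : LieSubmodule K H L)
    · rw [hbot] at hy
      simp only [LieSubmodule.mem_bot] at hy
      simp [hy]
    · have := key N χ hy
      rw [hN χ hbot] at this
      simpa using this
  | zero => simp
  | add u v _ _ hu hv => rw [map_add, hu, hv, add_zero]


/-- Let `L` be a finite-dimensional semisimple Lie algebra over an algebraically closed
field of characteristic zero with nondegenerate Killing form `κ`, `H` a (splitting)
Cartan subalgebra, `α` a root with coroot `h_α`, `e ∈ L_α`, `f ∈ L_{−α}` such that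
`(h_α, e, f)` is an `sl₂`-triple, and `θ = exp(ad e) ∘ exp(ad (−f)) ∘ exp(ad e)`.
For `λ ∈ H*` let `h_λ ∈ H` be the unique element with `κ(h_λ, x) = λ(x)` for all
`x ∈ H`.  Then `θ(h_λ) = h_{s_α λ}`, where `s_α λ = λ − λ(h_α) • α` and `α` is regarded
as a functional on `H`. -/
theorem weyl_element_maps_killing_dual_to_reflected_dual
    {K L : Type*} [Field K] [IsAlgClosed K] [CharZero K]
    [LieRing L] [LieAlgebra K L] [FiniteDimensional K L]
    [LieAlgebra.IsSemisimple K L] [LieAlgebra.IsKilling K L]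
    (H : LieSubalgebra K L) [H.IsCartanSubalgebra]
    (α : Module.Dual K H) (hroot : IsRoot' H α)
    (hα : H) (hcoroot : α hα = 2)
    (e f : L) (hmeme : e ∈ rootSpace' H α) (hmemf : f ∈ rootSpace' H (-α))
    (hef : ⁅e, f⁆ = (hα : L)) (he : e ≠ 0) (hf : f ≠ 0)
    (hhe : ⁅(hα : L), e⁆ = (2 : K) • e) (hhf : ⁅(hα : L), f⁆ = (-2 : K) • f)
    (θ : Module.End K L)
    (hθ : θ = expEnd (LieAlgebra.ad K L e) * expEnd (LieAlgebra.ad K L (-f)) *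
      expEnd (LieAlgebra.ad K L e))
    (lam : Module.Dual K H)
    (hlam : H) (hdual : ∀ x : H, killingForm K L (hlam : L) (x : L) = lam x)
    (hlam' : H)
    (hdual' : ∀ x : H, killingForm K L (hlam' : L) (x : L) = (lam - lam hα • α) x) :
    θ (hlam : L) = (hlam' : L) := by
  classical
  obtain ⟨hα0, -⟩ := hroot
  have hαfun : (⇑α : H → K) ≠ 0 := fun h => hα0 (LinearMap.ext fun x => congrFun h x)
  have hnegfun : (⇑(-α) : H → K) ≠ 0 := fun h => hα0 (by
    have : (-α : Module.Dual K H) = 0 := LinearMap.ext fun x => congrFun h x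
    simpa [neg_eq_zero] using this)
  have hadE : IsNilpotent (LieAlgebra.ad K L e) :=
    isNilpotent_ad_of_mem_rootSpace' H hαfun hmeme
  have hadF : IsNilpotent (LieAlgebra.ad K L (-f)) := by
    have hneg : LieAlgebra.ad K L (-f) = - LieAlgebra.ad K L f := by
      ext x; simp
    rw [hneg]
    exact (isNilpotent_ad_of_mem_rootSpace' H hnegfun hmemf).neg
  set E := LieAlgebra.ad K L e with hE
  set F := LieAlgebra.ad K L (-f) with hF
  -- basic bracket facts
  have memE : ∀ h : H, ⁅(h : L), e⁆ = α h • e := mem_rootSpace'_iff.mp hmeme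
  have memF : ∀ h : H, ⁅(h : L), f⁆ = -(α h) • f := by
    intro h
    have := mem_rootSpace'_iff.mp hmemf h
    simpa using this
  -- the key scalar: α hlam
  set b := α hlam with hb
  have hEapp : ∀ x : L, E x = ⁅e, x⁆ := fun x => rfl
  have hFapp : ∀ x : L, F x = ⁅-f, x⁆ := fun x => rfl
  -- Step 1 : expEnd E hlam = hlam - b • e
  have hE1 : E (hlam : L) = -(b • e) := by
    rw [hEapp, ← lie_skew, memE hlam]
  have hE2 : (E ^ 2) (hlam : L) = 0 := by
    rw [pow_two, Module.End.mul_apply, hE1, map_neg, map_smul, hEapp, lie_self,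
      smul_zero, neg_zero]
  have step1 : expEnd E (hlam : L) = (hlam : L) - b • e := by
    rw [expEnd_apply_eq_sum hadE _ hE2]
    simp [Finset.sum_range_succ, hE1, sub_eq_add_neg]
  -- Step 2 : expEnd F (hlam - b • e) = hlam - b • e - b • hα
  have hFhlam : F (hlam : L) = -(b • f) := by
    rw [hFapp, neg_lie, ← lie_skew, memF hlam]
    simp [hb]
  have hFe : F e = (hα : L) := by
    rw [hFapp, neg_lie, lie_skew, hef]
  have hFf : F f = 0 := by
    rw [hFapp, neg_lie, lie_self, neg_zero]
  have hFhα : F (hα : L) = (-2 : K) • f := by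
    rw [hFapp, neg_lie, lie_skew, hhf]
  have c1 : F ((hlam : L) - b • e) = -(b • f) - b • (hα : L) := by
    rw [map_sub, map_smul, hFhlam, hFe]
  have c2 : F (-(b • f) - b • (hα : L)) = (2 * b) • f := by
    rw [map_sub, map_neg, map_smul, map_smul, hFf, hFhα]
    module
  have c3 : F ((2 * b) • f) = 0 := by
    rw [map_smul, hFf, smul_zero]
  have hF3 : (F ^ 3) ((hlam : L) - b • e) = 0 := by
    rw [pow_succ, Module.End.mul_apply, pow_succ, Module.End.mul_apply, pow_one, c1, c2, c3]
  have step2 : expEnd F ((hlam : L) - b • e) = (hlam : L) - b • e - b • (hα : L) := by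
    rw [expEnd_apply_eq_sum hadF _ hF3]
    have hp2 : (F ^ 2) ((hlam : L) - b • e) = (2 * b) • f := by
      rw [pow_two, Module.End.mul_apply, c1, c2]
    simp only [Finset.sum_range_succ, Finset.sum_range_zero, pow_zero, pow_one,
      Module.End.one_apply, c1, hp2, Nat.factorial]
    push_cast
    match_scalars <;> ring
  -- Step 3 : expEnd E (hlam - b • e - b • hα) = hlam - b • hα
  have hEe : E e = 0 := by
    rw [hEapp, lie_self]
  have hEhα : E (hα : L) = -((2 : K) • e) := by
    rw [hEapp, ← lie_skew, hhe]
  have d1 : E ((hlam : L) - b • e - b • (hα : L)) = b • e := by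
    rw [map_sub, map_sub, map_smul, map_smul, hE1, hEe, hEhα]
    match_scalars <;> ring
  have d2 : E (b • e) = 0 := by
    rw [map_smul, hEe, smul_zero]
  have hE2' : (E ^ 2) ((hlam : L) - b • e - b • (hα : L)) = 0 := by
    rw [pow_two, Module.End.mul_apply, d1, d2]
  have step3 : expEnd E ((hlam : L) - b • e - b • (hα : L)) = (hlam : L) - b • (hα : L) := by
    rw [expEnd_apply_eq_sum hadE _ hE2']
    simp only [Finset.sum_range_succ, Finset.sum_range_zero, pow_zero, pow_one,
      Module.End.one_apply, d1, Nat.factorial]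
    push_cast
    match_scalars <;> ring
  have hrw : θ (hlam : L) = (hlam : L) - b • (hα : L) := by
    rw [hθ, Module.End.mul_apply, Module.End.mul_apply, step1, step2, step3]
  -- identify hα with the Killing-dual of α (up to the scalar c = κ(e,f))
  set c := killingForm K L e f with hc
  set t : H := (LieAlgebra.IsKilling.cartanEquivDual H).symm α with htdef
  have ht : ∀ x : H, killingForm K L (t : L) (x : L) = α x := by
    intro x
    have h1 : LieModule.traceForm K H L t x = α x :=
      LinearMap.BilinForm.apply_toDual_symm_apply
        (hB := LieAlgebra.IsKilling.traceForm_cartan_nondegenerate K L H) _ _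
    rw [← h1]
    rfl
  have hαt : (hα : L) = c • (t : L) := by
    have hker : ((hα : L) - c • (t : L)) ∈ LinearMap.ker (killingForm K L) := by
      apply LieAlgebra.mem_ker_killingForm_of_mem_rootSpace_of_forall_rootSpace_neg K L H
        (α := (0 : H → K))
      · rw [LieAlgebra.rootSpace_zero_eq]
        rw [LieSubalgebra.mem_toLieSubmodule]
        exact H.sub_mem hα.2 (H.smul_mem _ t.2)
      · intro z hz
        rw [neg_zero, LieAlgebra.rootSpace_zero_eq, LieSubalgebra.mem_toLieSubmodule] at hz
        have hz' : killingForm K L (hα : L) z = c * α ⟨z, hz⟩ := by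
          rw [← hef, LieModule.traceForm_apply_lie_apply]
          have : ⁅f, z⁆ = α ⟨z, hz⟩ • f := by
            rw [← lie_skew, memF ⟨z, hz⟩]
            module
          rw [this, map_smul, smul_eq_mul, mul_comm]
        rw [map_sub, LinearMap.sub_apply, hz', map_smul, LinearMap.smul_apply, smul_eq_mul]
        have := ht ⟨z, hz⟩
        rw [this, sub_self]
    rw [LieAlgebra.IsKilling.ker_killingForm_eq_bot, Submodule.mem_bot] at hker
    exact sub_eq_zero.mp hker
  have hκα : ∀ x : H, killingForm K L (hα : L) (x : L) = c * α x := by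
    intro x
    rw [hαt, map_smul, LinearMap.smul_apply, ht, smul_eq_mul]
  have hca : lam hα = c * b := by
    rw [← hdual hα, hαt, map_smul, smul_eq_mul, LieModule.traceForm_comm K L L _ (t : L), ht]
  -- conclude via nondegeneracy of the Killing form restricted to H
  have key : ∀ x : H,
      killingForm K L ((hlam : L) - b • (hα : L) - (hlam' : L)) (x : L) = 0 := by
    intro x
    rw [map_sub, map_sub, LinearMap.sub_apply, LinearMap.sub_apply, map_smul,
      LinearMap.smul_apply, hdual x, hκα x, hdual' x]
    simp only [LinearMap.sub_apply, LinearMap.smul_apply, smul_eq_mul]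
    rw [hca]
    ring
  have hzH : ((hlam - b • hα - hlam' : H) : L) = (hlam : L) - b • (hα : L) - (hlam' : L) := rfl
  have hz : (hlam - b • hα - hlam' : H) = 0 := by
    apply (LieAlgebra.IsKilling.traceForm_cartan_nondegenerate K L H).1
    intro x
    have := key x
    rw [← hzH] at this
    exact this
  have : hlam - b • hα = hlam' := by
    rwa [sub_eq_zero] at hz
  rw [hrw, ← this]
  rw [show ((hlam - b • hα : H) : L) = (hlam : L) - ((b • hα : H) : L) from rfl,
    show ((b • hα : H) : L) = b • (hα : L) from rfl]
end
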